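/- arXiv:2503.05644 — 5 statements merged into one kernel-verified Lean document; each statement's English description precedes it below -/
import Mathlib

section
/- Let β_1,…,β_n be a T-action datum in V. If w ∈ ℂ^n satisfies λw = 0 and β(w) = 0, then w = 0; that is, the pair (λ,β) associated to a T-action datum is T-log-symplectic. -/
open Finset Matrix

noncomputable section

/-- The standard embedding of an integer vector into `ℂⁿ`. -/
def cvec {n : ℕ} (w : Fin n → ℤ) : Fin n → ℂ := fun j => (w j : ℂ)

/-- `J_w = { j : w_j = -1 }`. -/
def Jset {n : ℕ} (w : Fin n → ℤ) : Finset (Fin n) :=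
  Finset.univ.filter (fun j => w j = -1)

/-- The linear map `β : ℂⁿ → V`, `w ↦ ∑ w_j β_j`. -/
def bmap {n : ℕ} {V : Type*} [AddCommGroup V] [Module ℂ V]
    (β : Fin n → V) (w : Fin n → ℂ) : V :=
  ∑ j, w j • β j

/-- The pair `(λ, β)` is T-log-symplectic. -/
def TLogSymp {n : ℕ} {V : Type*} [AddCommGroup V] [Module ℂ V]
    (M : Matrix (Fin n) (Fin n) ℂ) (β : Fin n → V) : Prop :=
  ∀ w : Fin n → ℂ, M.mulVec w = 0 → bmap β w = 0 → w = 0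

/-- The set `W(λ, β)`. -/
def Wset {n : ℕ} {V : Type*} [AddCommGroup V] [Module ℂ V]
    (M : Matrix (Fin n) (Fin n) ℂ) (β : Fin n → V) : Set (Fin n → ℤ) :=
  {w | (∀ j, -1 ≤ w j) ∧ (∀ j, j ∉ Jset w → M.mulVec (cvec w) j = 0) ∧
    bmap β (cvec w) = 0}

/-- The set `S(λ, β)` of smoothable weights. -/
def Sset {n : ℕ} {V : Type*} [AddCommGroup V] [Module ℂ V]
    (M : Matrix (Fin n) (Fin n) ℂ) (β : Fin n → V) : Set (Fin n → ℤ) :=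
  {θ | θ ∈ Wset M β ∧ (Jset θ).card = 2}

/-- `S_m`: sums of exactly `m` elements of `S`, repetitions allowed. -/
def SumOf {n : ℕ} (S : Set (Fin n → ℤ)) (m : ℕ) : Set (Fin n → ℤ) :=
  {w | ∃ l : Multiset (Fin n → ℤ), (∀ x ∈ l, x ∈ S) ∧ Multiset.card l = m ∧ l.sum = w}

/-- `S_{≥ m}`: sums of at least `m` elements of `S`, repetitions allowed. -/
def SumGE {n : ℕ} (S : Set (Fin n → ℤ)) (m : ℕ) : Set (Fin n → ℤ) :=
  {w | ∃ m', m ≤ m' ∧ w ∈ SumOf S m'}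

/-- A vector `w ∈ ℤⁿ` is negatively bordered. -/
def NegBordered {n : ℕ} (w : Fin n → ℤ) : Prop :=
  ∃ j k : Fin n, j < k ∧ w j = -1 ∧ w k = -1 ∧ (∀ i, i < j → w i = 0) ∧
    (∀ i, k < i → w i = 0) ∧ (∀ i, j < i → i < k → 0 ≤ w i)

/-- The Cartan number `a_{b,ξ} = 2⟨b,ξ⟩/⟨b,b⟩`. -/
def cartan {V : Type*} [AddCommGroup V] [Module ℂ V]
    (B : V →ₗ[ℂ] V →ₗ[ℂ] ℂ) (b ξ : V) : ℂ :=
  2 * B b ξ / B b b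

/-- The reflection `s_b(ξ) = ξ - a_{b,ξ} b`. -/
def sRefl {V : Type*} [AddCommGroup V] [Module ℂ V]
    (B : V →ₗ[ℂ] V →ₗ[ℂ] ℂ) (b ξ : V) : V :=
  ξ - cartan B b ξ • b

/-- `reflL B g m = s_{g 0} ∘ s_{g 1} ∘ ⋯ ∘ s_{g (m-1)}`. -/
def reflL {V : Type*} [AddCommGroup V] [Module ℂ V]
    (B : V →ₗ[ℂ] V →ₗ[ℂ] ℂ) (g : ℕ → V) : ℕ → V → V
  | 0, ξ => ξ
  | m + 1, ξ => reflL B g m (sRefl B (g m) ξ)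

/-- `reflR B g m = s_{g (m-1)} ∘ ⋯ ∘ s_{g 1} ∘ s_{g 0}`. -/
def reflR {V : Type*} [AddCommGroup V] [Module ℂ V]
    (B : V →ₗ[ℂ] V →ₗ[ℂ] ℂ) (g : ℕ → V) : ℕ → V → V
  | 0, ξ => ξ
  | m + 1, ξ => sRefl B (g m) (reflR B g m ξ)

/-- Extension of a `Fin n`-indexed family to `ℕ` by zero. -/
def gext {n : ℕ} {V : Type*} [AddCommGroup V] (v : Fin n → V) : ℕ → V :=
  fun t => if h : t < n then v ⟨t, h⟩ else 0

/-- `γ_j = s_{β_1} s_{β_2} ⋯ s_{β_{j-1}} (β_j)`. -/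
def gam {n : ℕ} {V : Type*} [AddCommGroup V] [Module ℂ V]
    (B : V →ₗ[ℂ] V →ₗ[ℂ] ℂ) (β : Fin n → V) (j : Fin n) : V :=
  reflL B (gext β) j.val (β j)

/-- The Poisson coefficient matrix `λ` of a T-action datum: `λ_{jk} = -⟨β_j, β_k⟩` for
`j < k`, `⟨β_j, β_k⟩` for `j > k`, and `0` on the diagonal. -/
def lam {n : ℕ} {V : Type*} [AddCommGroup V] [Module ℂ V]
    (B : V →ₗ[ℂ] V →ₗ[ℂ] ℂ) (β : Fin n → V) : Matrix (Fin n) (Fin n) ℂ :=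
  Matrix.of fun j k =>
    if j < k then -(B (β j) (β k)) else if k < j then B (β j) (β k) else 0

/-- The upper triangular matrix `Q` with `Q_{jj} = 1` and `Q_{jk} = a_{γ_j, γ_k}` for
`j < k`. -/
def Qmat {n : ℕ} {V : Type*} [AddCommGroup V] [Module ℂ V]
    (B : V →ₗ[ℂ] V →ₗ[ℂ] ℂ) (γ : Fin n → V) : Matrix (Fin n) (Fin n) ℂ :=
  Matrix.of fun j k => if j = k then 1 else if j < k then cartan B (γ j) (γ k) else 0

open scoped Classical in
/-- The set `{k ∈ [j+1, n] : γ_k = γ_j}`, whose minimum (when it exists) is `j⁺`. -/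
def plusSet {n : ℕ} {V : Type*} (γ : Fin n → V) (j : Fin n) : Finset (Fin n) :=
  Finset.univ.filter (fun k => j < k ∧ γ k = γ j)

/-- `e_{j⁺} ∈ ℂⁿ`, with the convention `e_{+∞} = 0`. -/
def eplus {n : ℕ} {V : Type*} (γ : Fin n → V) (j : Fin n) : Fin n → ℂ :=
  if h : (plusSet γ j).Nonempty then Pi.single ((plusSet γ j).min' h) 1 else 0

/-- `θ^{(j)} = Q (e_j - e_{j⁺}) ∈ ℂⁿ`. -/
def thetaC {n : ℕ} {V : Type*} [AddCommGroup V] [Module ℂ V]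
    (B : V →ₗ[ℂ] V →ₗ[ℂ] ℂ) (β : Fin n → V) (j : Fin n) : Fin n → ℂ :=
  (Qmat B (gam B β)).mulVec ((Pi.single j 1 : Fin n → ℂ) - eplus (gam B β) j)

/-- The linear map `β : ℂⁿ → V`, `w ↦ ∑ w_j β_j`, as a bundled linear map. -/
def betaLin {n : ℕ} {V : Type*} [AddCommGroup V] [Module ℂ V]
    (β : Fin n → V) : (Fin n → ℂ) →ₗ[ℂ] V where
  toFun w := ∑ j, w j • β j
  map_add' x y := by simp [add_smul, Finset.sum_add_distrib]
  map_smul' a x := by simp [Finset.smul_sum, mul_smul]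

theorem stmt9 (n : ℕ) (hn : 0 < n) {V : Type*} [AddCommGroup V] [Module ℂ V]
    (B : V →ₗ[ℂ] V →ₗ[ℂ] ℂ) (hBsymm : ∀ x y, B x y = B y x)
    (β : Fin n → V) (hβ : ∀ j, B (β j) (β j) ≠ 0) :
    TLogSymp (lam B β) β := by
  classical
  intro w hM hb
  by_contra hw
  have hS : (Finset.univ.filter (fun k => w k ≠ 0)).Nonempty := by
    rcases Function.ne_iff.mp hw with ⟨j, hj⟩
    exact ⟨j, by simpa using hj⟩
  set S := Finset.univ.filter (fun k => w k ≠ 0) with hSdef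
  set j := S.min' hS with hj
  have hjS : j ∈ S := S.min'_mem hS
  have hjne : w j ≠ 0 := by simpa [hSdef] using hjS
  have hmin : ∀ k, k < j → w k = 0 := by
    intro k hk
    by_contra hk0
    exact absurd (S.min'_le k (by simpa [hSdef] using hk0)) (not_le.mpr hk)
  have eqA : ∑ k, w k * B (β j) (β k) = 0 := by
    have := congrArg (B (β j)) hb
    simpa [bmap, map_sum] using this
  have eqB : ∑ k, lam B β j k * w k = 0 := by
    have := congrFun hM j
    simpa [Matrix.mulVec, dotProduct] using this
  have key : ∀ k, lam B β j k * w k + w k * B (β j) (β k)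
      = if k = j then w j * B (β j) (β j) else 0 := by
    intro k
    rcases lt_trichotomy j k with h | h | h
    · have : lam B β j k = -(B (β j)) (β k) := by simp [lam, h]
      rw [this, if_neg h.ne']
      ring
    · simp [lam, h.symm, lt_irrefl]
    · have hw0 := hmin k h
      simp [lam, hw0, h.ne]
  have : w j * B (β j) (β j) = 0 := by
    calc w j * B (β j) (β j)
        = ∑ k, (if k = j then w j * B (β j) (β j) else 0) := by
          rw [Finset.sum_ite_eq' Finset.univ j]
          simp
      _ = ∑ k, (lam B β j k * w k + w k * B (β j) (β k)) := by
          exact Finset.sum_congr rfl fun k _ => (key k).symm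
      _ = 0 := by rw [Finset.sum_add_distrib, eqA, eqB, add_zero]
  exact hjne (by
    rcases mul_eq_zero.mp this with h | h
    · exact h
    · exact absurd h (hβ j))
end
end

section
/- Let β_1,…,β_n be a T-action datum in V. Then for every k ∈ [1,n]: γ_k = β_k + Σ_{j=1}^{k−1} a_{γ_j,γ_k} β_j, and β_k = γ_k + Σ_{j=1}^{k−1} a_{β_j,β_k} γ_j. -/
open Finset Matrix

noncomputable section

section Aux

variable {V : Type*} [AddCommGroup V] [Module ℂ V] (B : V →ₗ[ℂ] V →ₗ[ℂ] ℂ)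

lemma cartan_sub (b x y : V) : cartan B b (x - y) = cartan B b x - cartan B b y := by
  simp [cartan, mul_sub, sub_div]

lemma cartan_smul (b : V) (c : ℂ) (x : V) : cartan B b (c • x) = c * cartan B b x := by
  simp [cartan]; ring

lemma sRefl_sub (b x y : V) : sRefl B b (x - y) = sRefl B b x - sRefl B b y := by
  simp only [sRefl, cartan_sub, sub_smul]; abel

lemma sRefl_smul (b : V) (c : ℂ) (x : V) : sRefl B b (c • x) = c • sRefl B b x := by
  simp [sRefl, cartan_smul, smul_sub, smul_smul]

lemma reflL_sub (g : ℕ → V) :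
    ∀ m x y, reflL B g m (x - y) = reflL B g m x - reflL B g m y
  | 0, _, _ => rfl
  | m + 1, x, y => by rw [reflL, sRefl_sub, reflL_sub g m]; rfl

lemma reflL_smul (g : ℕ → V) :
    ∀ m (c : ℂ) x, reflL B g m (c • x) = c • reflL B g m x
  | 0, _, _ => rfl
  | m + 1, c, x => by rw [reflL, sRefl_smul, reflL_smul g m]; rfl

lemma sRefl_invol (b : V) (hb : B b b ≠ 0) (x : V) : sRefl B b (sRefl B b x) = x := by
  have h2 : cartan B b b = 2 := by
    rw [cartan, mul_div_assoc, div_self hb, mul_one]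
  rw [sRefl, sRefl, cartan_sub, cartan_smul, h2]
  module

lemma B_sRefl (hs : ∀ x y, B x y = B y x) (b : V) (hb : B b b ≠ 0) (x y : V) :
    B (sRefl B b x) (sRefl B b y) = B x y := by
  have hxb : B x b = B b x := hs x b
  simp only [sRefl, cartan, map_sub, _root_.map_smul, LinearMap.sub_apply,
    LinearMap.smul_apply, smul_eq_mul]
  rw [hxb]
  field_simp
  ring

lemma B_reflL (hs : ∀ x y, B x y = B y x) (g : ℕ → V) :
    ∀ m, (∀ t, t < m → B (g t) (g t) ≠ 0) →
      ∀ x y, B (reflL B g m x) (reflL B g m y) = B x y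
  | 0, _, _, _ => rfl
  | m + 1, h, x, y => by
      rw [reflL, reflL, B_reflL hs g m (fun t ht => h t (ht.trans (Nat.lt_succ_self m))),
        B_sRefl B hs (g m) (h m (Nat.lt_succ_self m))]

lemma reflL_reflR (g : ℕ → V) :
    ∀ m, (∀ t, t < m → B (g t) (g t) ≠ 0) →
      ∀ x, reflL B g m (reflR B g m x) = x
  | 0, _, _ => rfl
  | m + 1, h, x => by
      rw [reflR, reflL, sRefl_invol B (g m) (h m (Nat.lt_succ_self m)),
        reflL_reflR g m (fun t ht => h t (ht.trans (Nat.lt_succ_self m)))]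

lemma ident2 (g : ℕ → V) (v : V) :
    ∀ m, reflL B g m v =
      v - ∑ t ∈ Finset.range m, cartan B (g t) v • reflL B g t (g t)
  | 0 => by simp [reflL]
  | m + 1 => by
      rw [reflL, show sRefl B (g m) v = v - cartan B (g m) v • g m from rfl,
        reflL_sub, reflL_smul, ident2 g v m, Finset.sum_range_succ]
      abel

lemma ident1 (hs : ∀ x y, B x y = B y x) (g : ℕ → V) (v : V) :
    ∀ m, (∀ t, t < m → B (g t) (g t) ≠ 0) →
      reflR B g m v =
        v - ∑ t ∈ Finset.range m, cartan B (reflL B g t (g t)) v • g t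
  | 0, _ => by simp [reflR]
  | m + 1, h => by
      have hm : ∀ t, t < m → B (g t) (g t) ≠ 0 :=
        fun t ht => h t (ht.trans (Nat.lt_succ_self m))
      have hc : cartan B (g m) (reflR B g m v) = cartan B (reflL B g m (g m)) v := by
        unfold cartan
        rw [← B_reflL B hs g m hm (g m) (reflR B g m v), reflL_reflR B g m hm v,
          ← B_reflL B hs g m hm (g m) (g m)]
      rw [reflR, show sRefl B (g m) (reflR B g m v)
          = reflR B g m v - cartan B (g m) (reflR B g m v) • g m from rfl,
        hc, ident1 hs g v m hm, Finset.sum_range_succ]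
      abel

lemma reflR_reflL (g : ℕ → V) :
    ∀ m, (∀ t, t < m → B (g t) (g t) ≠ 0) →
      ∀ x, reflR B g m (reflL B g m x) = x
  | 0, _, _ => rfl
  | m + 1, h, x => by
      rw [reflL, reflR, reflR_reflL g m (fun t ht => h t (ht.trans (Nat.lt_succ_self m))),
        sRefl_invol B (g m) (h m (Nat.lt_succ_self m))]

lemma filter_lt_sum {n : ℕ} (k : Fin n) (f : Fin n → V) :
    ∑ j ∈ Finset.univ.filter (fun j => j < k), f j
      = ∑ t ∈ Finset.range k.val, gext f t := by
  refine Finset.sum_bij' (fun (j : Fin n) _ => (j : ℕ))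
    (fun t ht => ⟨t, (Finset.mem_range.mp ht).trans k.isLt⟩) ?_ ?_ ?_ ?_ ?_
  · intro a ha
    simp only [Finset.mem_filter, Finset.mem_univ, true_and] at ha
    exact Finset.mem_range.mpr ha
  · intro t ht
    simp only [Finset.mem_filter, Finset.mem_univ, true_and]
    exact Finset.mem_range.mp ht
  · intro a _; rfl
  · intro t _; rfl
  · intro a _
    simp [gext, a.isLt]

end Aux

theorem stmt10 (n : ℕ) (hn : 0 < n) {V : Type*} [AddCommGroup V] [Module ℂ V]
    (B : V →ₗ[ℂ] V →ₗ[ℂ] ℂ) (hBsymm : ∀ x y, B x y = B y x)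
    (β : Fin n → V) (hβ : ∀ j, B (β j) (β j) ≠ 0) :
    ∀ k : Fin n,
      gam B β k = β k + ∑ j ∈ Finset.univ.filter (fun j => j < k),
        cartan B (gam B β j) (gam B β k) • β j ∧
      β k = gam B β k + ∑ j ∈ Finset.univ.filter (fun j => j < k),
        cartan B (β j) (β k) • gam B β j := by
  intro k
  have hgk : gext β (k : ℕ) = β k := by simp [gext]
  have hnz : ∀ t, t < (k : ℕ) → B (gext β t) (gext β t) ≠ 0 := by
    intro t ht
    have htn : t < n := ht.trans k.isLt
    simpa [gext, htn] using hβ ⟨t, htn⟩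
  have hgam : gam B β k = reflL B (gext β) (k : ℕ) (gext β (k : ℕ)) := by
    rw [gam, hgk]
  constructor
  · have h1 := ident1 B hBsymm (gext β)
      (reflL B (gext β) (k : ℕ) (gext β (k : ℕ))) (k : ℕ) hnz
    rw [reflR_reflL B (gext β) (k : ℕ) hnz] at h1
    have hsum : ∑ t ∈ Finset.range (k : ℕ),
        gext (fun j => cartan B (gam B β j) (gam B β k) • β j) t
        = ∑ t ∈ Finset.range (k : ℕ),
          cartan B (reflL B (gext β) t (gext β t))
            (reflL B (gext β) (k : ℕ) (gext β (k : ℕ))) • gext β t := by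
      refine Finset.sum_congr rfl fun t ht => ?_
      have htn : t < n := (Finset.mem_range.mp ht).trans k.isLt
      simp [gam, gext, htn]
    rw [filter_lt_sum, hsum, hgam, ← hgk]
    exact sub_eq_iff_eq_add.mp h1.symm
  · have h2 := ident2 B (gext β) (gext β (k : ℕ)) (k : ℕ)
    have hsum : ∑ t ∈ Finset.range (k : ℕ),
        gext (fun j => cartan B (β j) (β k) • gam B β j) t
        = ∑ t ∈ Finset.range (k : ℕ),
          cartan B (gext β t) (gext β (k : ℕ)) • reflL B (gext β) t (gext β t) := by
      refine Finset.sum_congr rfl fun t ht => ?_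
      have htn : t < n := (Finset.mem_range.mp ht).trans k.isLt
      simp [gam, gext, htn]
    rw [filter_lt_sum, hsum, hgam, ← hgk]
    exact (eq_sub_iff_add_eq.mp h2).symm
end
end

section
/- Let β_1,…,β_n be a T-action datum in V. Then every element of S(λ,β) is negatively bordered, the set S(λ,β) is linearly independent over ℂ, and S(λ,β) satisfies condition (W1): no sum of two or more elements of S(λ,β) (repetitions allowed) has all entries ≥ −1 and at most one entry equal to −1. -/
open Finset Matrix

noncomputable section

section Aux13

variable {n : ℕ} {V : Type*} [AddCommGroup V] [Module ℂ V]

/-- Partial sums `P_t = ∑_{i < t} θ_i β_i`. -/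
def Pc13 (β : Fin n → V) (θ : Fin n → ℤ) (t : ℕ) : V :=
  ∑ i ∈ Finset.univ.filter (fun i : Fin n => i.val < t), (θ i : ℂ) • β i

lemma Pc13_zero (β : Fin n → V) (θ : Fin n → ℤ) : Pc13 β θ 0 = 0 := by
  simp [Pc13]

lemma Pc13_succ (β : Fin n → V) (θ : Fin n → ℤ) (t : ℕ) (ht : t < n) :
    Pc13 β θ (t + 1) = Pc13 β θ t + (θ ⟨t, ht⟩ : ℂ) • β ⟨t, ht⟩ := by
  have hins : (Finset.univ.filter (fun i : Fin n => i.val < t + 1))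
      = insert ⟨t, ht⟩ (Finset.univ.filter (fun i : Fin n => i.val < t)) := by
    ext i
    simp only [mem_filter, mem_univ, true_and, mem_insert]
    constructor
    · intro h
      rcases Nat.lt_succ_iff_lt_or_eq.mp h with h | h
      · exact Or.inr h
      · exact Or.inl (Fin.ext h)
    · rintro (rfl | h)
      · exact Nat.lt_succ_self t
      · exact Nat.lt_succ_of_lt h
  rw [Pc13, hins, Finset.sum_insert (by simp), Pc13]
  exact add_comm _ _

lemma Pc13_top (β : Fin n → V) (θ : Fin n → ℤ) : Pc13 β θ n = bmap β (cvec θ) := by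
  rw [Pc13, bmap, Finset.filter_true_of_mem (fun i _ => i.isLt)]
  rfl

lemma Pc13_congr (β : Fin n → V) (θ θ' : Fin n → ℤ) (t : ℕ)
    (h : ∀ i : Fin n, i.val < t → θ i = θ' i) : Pc13 β θ t = Pc13 β θ' t := by
  refine Finset.sum_congr rfl fun m hm => ?_
  rw [h m (by simpa using hm)]

lemma key13 (B : V →ₗ[ℂ] V →ₗ[ℂ] ℂ) (β : Fin n → V) (θ : Fin n → ℤ)
    (hbm : bmap β (cvec θ) = 0) (i : Fin n) :
    (lam B β).mulVec (cvec θ) i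
      = 2 * B (β i) (Pc13 β θ i.val) + (θ i : ℂ) * B (β i) (β i) := by
  have hPc : B (β i) (Pc13 β θ i.val)
      = ∑ k : Fin n, (if (k : ℕ) < (i : ℕ) then (θ k : ℂ) * B (β i) (β k) else 0) := by
    rw [Pc13, map_sum, Finset.sum_filter]
    refine Finset.sum_congr rfl fun k _ => ?_
    split <;> simp
  have hbm' : (∑ k : Fin n, (θ k : ℂ) * B (β i) (β k)) = 0 := by
    have h := congrArg (fun v => B (β i) v) hbm
    simpa [bmap, cvec, map_sum] using h
  have hstep : ∀ k : Fin n, lam B β i k * cvec θ k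
      = 2 * (if (k : ℕ) < (i : ℕ) then (θ k : ℂ) * B (β i) (β k) else 0)
        + (if k = i then (θ i : ℂ) * B (β i) (β i) else 0)
        - (θ k : ℂ) * B (β i) (β k) := by
    intro k
    rcases lt_trichotomy (k : ℕ) (i : ℕ) with h | h | h
    · have h1 : ¬ (i < k) := by rw [Fin.lt_def]; omega
      have h2 : k < i := by rw [Fin.lt_def]; exact h
      have h3 : ¬ (k = i) := by intro e; rw [e] at h; omega
      simp only [lam, Matrix.of_apply, if_neg h1, if_pos h2, if_neg h3, if_pos h, cvec]
      ring
    · have h2 : k = i := Fin.ext h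
      subst h2
      simp only [lam, Matrix.of_apply, cvec, lt_self_iff_false, if_false, if_true, eq_self_iff_true]
      ring
    · have h1 : i < k := by rw [Fin.lt_def]; exact h
      have h3 : ¬ (k = i) := by intro e; rw [e] at h; omega
      have h4 : ¬ ((k : ℕ) < (i : ℕ)) := by omega
      simp only [lam, Matrix.of_apply, if_pos h1, if_neg h3, if_neg h4, cvec]
      ring
  calc (lam B β).mulVec (cvec θ) i = ∑ k, lam B β i k * cvec θ k := by
        simp [Matrix.mulVec, dotProduct]
    _ = ∑ k : Fin n, (2 * (if (k : ℕ) < (i : ℕ) then (θ k : ℂ) * B (β i) (β k) else 0)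
        + (if k = i then (θ i : ℂ) * B (β i) (β i) else 0)
        - (θ k : ℂ) * B (β i) (β k)) := Finset.sum_congr rfl fun k _ => hstep k
    _ = 2 * B (β i) (Pc13 β θ i.val) + (θ i : ℂ) * B (β i) (β i) := by
        rw [Finset.sum_sub_distrib, Finset.sum_add_distrib, hbm', hPc, ← Finset.mul_sum]
        simp

lemma mem_Jset13 {θ : Fin n → ℤ} {i : Fin n} : i ∈ Jset θ ↔ θ i = -1 := by
  simp [Jset]

lemma fwd13 (B : V →ₗ[ℂ] V →ₗ[ℂ] ℂ) (β : Fin n → V) (θ : Fin n → ℤ)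
    (hβ : ∀ j, B (β j) (β j) ≠ 0)
    (hW : θ ∈ Wset (lam B β) β) (j : Fin n) (hj : ∀ i, θ i = -1 → j ≤ i) :
    ∀ t, t ≤ j.val → (Pc13 β θ t = 0 ∧ ∀ i : Fin n, i.val < t → θ i = 0) := by
  obtain ⟨h1, h2, h3⟩ := hW
  intro t
  induction t with
  | zero => intro _; exact ⟨Pc13_zero β θ, fun i hi => absurd hi (Nat.not_lt_zero _)⟩
  | succ t ih =>
    intro ht
    have htn : t < n := by have := j.isLt; omega
    obtain ⟨hP, hz⟩ := ih (by omega)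
    set i : Fin n := ⟨t, htn⟩ with hidef
    have hiJ : i ∉ Jset θ := by
      rw [mem_Jset13]
      intro h
      have := hj i h
      rw [Fin.le_def] at this
      simp only [hidef] at this
      omega
    have h0 := h2 i hiJ
    rw [key13 B β θ h3 i] at h0
    have hival : (i : ℕ) = t := rfl
    rw [hival, hP] at h0
    simp only [map_zero, mul_zero, zero_add] at h0
    have hθi : (θ i : ℂ) = 0 := by
      rcases mul_eq_zero.mp h0 with h | h
      · exact h
      · exact absurd h (hβ i)
    have hθi' : θ i = 0 := by exact_mod_cast hθi
    refine ⟨?_, ?_⟩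
    · rw [Pc13_succ β θ t htn, hP, hθi']; simp
    · intro i' hi'
      rcases Nat.lt_succ_iff_lt_or_eq.mp hi' with h | h
      · exact hz i' h
      · have : i' = i := Fin.ext h
        rw [this]; exact hθi'

lemma bwd13 (B : V →ₗ[ℂ] V →ₗ[ℂ] ℂ) (β : Fin n → V) (θ : Fin n → ℤ)
    (hβ : ∀ j, B (β j) (β j) ≠ 0)
    (hW : θ ∈ Wset (lam B β) β) (k : Fin n) (hk : ∀ i, θ i = -1 → i ≤ k) :
    ∀ d t, n = t + d → k.val < t → (Pc13 β θ t = 0 ∧ ∀ i : Fin n, t ≤ i.val → θ i = 0) := by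
  obtain ⟨h1, h2, h3⟩ := hW
  intro d
  induction d with
  | zero =>
    intro t htn _
    have : t = n := by omega
    subst this
    exact ⟨by rw [Pc13_top]; exact h3, fun i hi => absurd i.isLt (by omega)⟩
  | succ d ih =>
    intro t htn ht
    have htn' : t < n := by omega
    obtain ⟨hP, hz⟩ := ih (t + 1) (by omega) (by omega)
    set i : Fin n := ⟨t, htn'⟩ with hidef
    have hiJ : i ∉ Jset θ := by
      rw [mem_Jset13]
      intro h
      have := hk i h
      rw [Fin.le_def] at this
      simp only [hidef] at this
      omega
    have h0 := h2 i hiJ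
    rw [key13 B β θ h3 i] at h0
    have hPt : Pc13 β θ t = -((θ i : ℂ) • β i) := by
      have hs := Pc13_succ β θ t htn'
      rw [hP] at hs
      exact eq_neg_of_add_eq_zero_left hs.symm
    have hival : (i : ℕ) = t := rfl
    rw [hival, hPt] at h0
    have hb : B (β i) (-((θ i : ℂ) • β i)) = -((θ i : ℂ) * B (β i) (β i)) := by
      rw [map_neg, LinearMap.map_smul, smul_eq_mul]
    rw [hb] at h0
    have hθi : (θ i : ℂ) = 0 := by
      rcases mul_eq_zero.mp (show (θ i : ℂ) * B (β i) (β i) = 0 by linear_combination -h0) with h | h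
      · exact h
      · exact absurd h (hβ i)
    have hθi' : θ i = 0 := by exact_mod_cast hθi
    refine ⟨?_, ?_⟩
    · rw [hPt, hθi']; simp
    · intro i' hi'
      rcases eq_or_lt_of_le hi' with h | h
      · have : i' = i := Fin.ext h.symm
        rw [this]; exact hθi'
      · exact hz i' (by omega)

lemma struct13 (B : V →ₗ[ℂ] V →ₗ[ℂ] ℂ) (β : Fin n → V)
    (hβ : ∀ j, B (β j) (β j) ≠ 0) {θ : Fin n → ℤ}
    (hS : θ ∈ Sset (lam B β) β) (h : (Jset θ).Nonempty) :
    (Jset θ).min' h < (Jset θ).max' h ∧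
    Jset θ = {(Jset θ).min' h, (Jset θ).max' h} ∧
    θ ((Jset θ).min' h) = -1 ∧ θ ((Jset θ).max' h) = -1 ∧
    (∀ i, i < (Jset θ).min' h → θ i = 0) ∧
    (∀ i, (Jset θ).max' h < i → θ i = 0) ∧
    (∀ i, i ≠ (Jset θ).min' h → i ≠ (Jset θ).max' h → 0 ≤ θ i) ∧
    Pc13 β θ ((Jset θ).max' h).val = β ((Jset θ).max' h) := by
  obtain ⟨hW, hcard⟩ := hS
  set j := (Jset θ).min' h with hjdef
  set k := (Jset θ).max' h with hkdef
  have hjk : j < k := Finset.min'_lt_max'_of_card _ (by rw [hcard]; norm_num)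
  have hjJ : j ∈ Jset θ := Finset.min'_mem _ _
  have hkJ : k ∈ Jset θ := Finset.max'_mem _ _
  have hJeq : Jset θ = {j, k} := by
    refine (Finset.eq_of_subset_of_card_le ?_ ?_).symm
    · intro x hx
      rcases Finset.mem_insert.mp hx with rfl | hx
      · exact hjJ
      · rw [Finset.mem_singleton.mp hx]; exact hkJ
    · rw [hcard, Finset.card_insert_of_notMem (by simp [Finset.mem_singleton, hjk.ne]),
        Finset.card_singleton]
  have hj1 : θ j = -1 := mem_Jset13.mp hjJ
  have hk1 : θ k = -1 := mem_Jset13.mp hkJ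
  have hjmin : ∀ i, θ i = -1 → j ≤ i := fun i hi => Finset.min'_le _ _ (mem_Jset13.mpr hi)
  have hkmax : ∀ i, θ i = -1 → i ≤ k := fun i hi => Finset.le_max' _ _ (mem_Jset13.mpr hi)
  have hfwd := fwd13 B β θ hβ hW j hjmin
  have hbwd := bwd13 B β θ hβ hW k hkmax (n - (k.val + 1)) (k.val + 1)
    (by omega) (by omega)
  refine ⟨hjk, hJeq, hj1, hk1, ?_, ?_, ?_, ?_⟩
  · intro i hi
    exact (hfwd j.val le_rfl).2 i hi
  · intro i hi
    exact hbwd.2 i hi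
  · intro i hij hik
    have hi1 : θ i ≠ -1 := by
      intro h1
      have : i ∈ Jset θ := mem_Jset13.mpr h1
      rw [hJeq] at this
      rcases Finset.mem_insert.mp this with rfl | h2
      · exact hij rfl
      · exact hik (Finset.mem_singleton.mp h2)
    have := hW.1 i
    omega
  · have hs := Pc13_succ β θ k.val k.isLt
    have hkk : (⟨k.val, k.isLt⟩ : Fin n) = k := Fin.ext rfl
    rw [hkk, hbwd.1, hk1] at hs
    push_cast at hs
    rw [neg_one_smul] at hs
    exact add_neg_eq_zero.mp hs.symm

lemma inj13 (B : V →ₗ[ℂ] V →ₗ[ℂ] ℂ) (β : Fin n → V)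
    (hβ : ∀ j, B (β j) (β j) ≠ 0) {θ θ' : Fin n → ℤ}
    (hS : θ ∈ Sset (lam B β) β) (hS' : θ' ∈ Sset (lam B β) β)
    (h : (Jset θ).Nonempty) (h' : (Jset θ').Nonempty)
    (hmin : (Jset θ).min' h = (Jset θ').min' h') : θ = θ' := by
  obtain ⟨hjk, hJeq, hj1, hk1, hbef, haft, hpos, hPk⟩ := struct13 B β hβ hS h
  obtain ⟨hjk', hJeq', hj1', hk1', hbef', haft', hpos', hPk'⟩ := struct13 B β hβ hS' h'
  obtain ⟨⟨hge, hmv, hbm⟩, hcard⟩ := hS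
  obtain ⟨⟨hge', hmv', hbm'⟩, hcard'⟩ := hS'
  set j := (Jset θ).min' h with hjdef
  set j' := (Jset θ').min' h' with hjdef'
  set k := (Jset θ).max' h with hkdef
  set k' := (Jset θ').max' h' with hkdef'
  have main : ∀ t, ∀ i : Fin n, i.val < t → θ i = θ' i := by
    intro t
    induction t with
    | zero => intro i hi; exact absurd hi (Nat.not_lt_zero _)
    | succ t ih =>
      intro i hit
      rcases Nat.lt_succ_iff_lt_or_eq.mp hit with hlt | heq
      · exact ih i hlt
      · have hPeq : Pc13 β θ t = Pc13 β θ' t := Pc13_congr β θ θ' t (fun m hm => ih m hm)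
        rcases lt_trichotomy t j.val with hc | hc | hc
        · have hij : i < j := by rw [Fin.lt_def]; omega
          have hij' : i < j' := by rw [← hmin]; exact hij
          rw [hbef i hij, hbef' i hij']
        · have hij : i = j := Fin.ext (by omega)
          rw [hij, hj1, hmin, hj1']
        · by_cases hJ : θ i = -1 <;> by_cases hJ' : θ' i = -1
          · rw [hJ, hJ']
          · exfalso
            have hik : i = k := by
              have hiJ : i ∈ Jset θ := mem_Jset13.mpr hJ
              rw [hJeq] at hiJ
              rcases Finset.mem_insert.mp hiJ with h0 | h0
              · exfalso
                have : i.val = j.val := by rw [h0]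
                omega
              · exact Finset.mem_singleton.mp h0
            have hiJ' : i ∉ Jset θ' := fun hh => hJ' (mem_Jset13.mp hh)
            have h0 := hmv' i hiJ'
            rw [key13 B β θ' hbm' i] at h0
            have hPt : Pc13 β θ' i.val = β i := by
              rw [heq, ← hPeq, show t = k.val from by rw [← heq, hik], hPk, hik]
            rw [hPt] at h0
            have hm2 : (θ' i : ℂ) = -2 := by
              have hfac : ((θ' i : ℂ) + 2) * B (β i) (β i) = 0 := by linear_combination h0
              rcases mul_eq_zero.mp hfac with hx | hx
              · linear_combination hx
              · exact absurd hx (hβ i)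
            have hm2' : θ' i = -2 := by exact_mod_cast hm2
            have := hge' i
            omega
          · exfalso
            have hik : i = k' := by
              have hiJ : i ∈ Jset θ' := mem_Jset13.mpr hJ'
              rw [hJeq'] at hiJ
              rcases Finset.mem_insert.mp hiJ with h0 | h0
              · exfalso
                have h1 : i.val = j'.val := by rw [h0]
                have h2 : j'.val = j.val := by rw [← hmin]
                omega
              · exact Finset.mem_singleton.mp h0
            have hiJ : i ∉ Jset θ := fun hh => hJ (mem_Jset13.mp hh)
            have h0 := hmv i hiJ
            rw [key13 B β θ hbm i] at h0
            have hPt : Pc13 β θ i.val = β i := by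
              rw [heq, hPeq, show t = k'.val from by rw [← heq, hik], hPk', hik]
            rw [hPt] at h0
            have hm2 : (θ i : ℂ) = -2 := by
              have hfac : ((θ i : ℂ) + 2) * B (β i) (β i) = 0 := by linear_combination h0
              rcases mul_eq_zero.mp hfac with hx | hx
              · linear_combination hx
              · exact absurd hx (hβ i)
            have hm2' : θ i = -2 := by exact_mod_cast hm2
            have := hge i
            omega
          · have hiJ : i ∉ Jset θ := fun hh => hJ (mem_Jset13.mp hh)
            have hiJ' : i ∉ Jset θ' := fun hh => hJ' (mem_Jset13.mp hh)
            have h0 := hmv i hiJ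
            have h0' := hmv' i hiJ'
            rw [key13 B β θ hbm i] at h0
            rw [key13 B β θ' hbm' i] at h0'
            have hPP : Pc13 β θ i.val = Pc13 β θ' i.val := by rw [heq]; exact hPeq
            rw [hPP] at h0
            have hcc : (θ i : ℂ) = (θ' i : ℂ) := by
              have hmm : (θ i : ℂ) * B (β i) (β i) = (θ' i : ℂ) * B (β i) (β i) := by
                linear_combination h0 - h0'
              exact mul_right_cancel₀ (hβ i) hmm
            exact_mod_cast hcc
  funext i
  exact main n i i.isLt

lemma echelon13 {ι : Type*} (v : ι → Fin n → ℂ) (p : ι → Fin n)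
    (hinj : Function.Injective p) (hd : ∀ i, v i (p i) = -1)
    (hlt : ∀ i j, j < p i → v i j = 0) : LinearIndependent ℂ v := by
  classical
  rw [linearIndependent_iff']
  intro s
  induction s using Finset.strongInduction with
  | _ s ih =>
    intro g hsum i hi
    have hne : (s.image p).Nonempty := ⟨p i, Finset.mem_image_of_mem _ hi⟩
    obtain ⟨i₀, hi₀s, hpi₀⟩ := Finset.mem_image.mp ((s.image p).min'_mem hne)
    have hminle : ∀ i' ∈ s, p i₀ ≤ p i' := fun i' h' => by
      rw [hpi₀]; exact Finset.min'_le _ _ (Finset.mem_image_of_mem _ h')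
    have hg0 : g i₀ = 0 := by
      have hev := congrFun hsum (p i₀)
      rw [Finset.sum_apply] at hev
      rw [Finset.sum_eq_single i₀ ?_ ?_] at hev
      · have hx : g i₀ * (-1) = 0 := by simpa [hd i₀] using hev
        linear_combination -hx
      · intro b hb hbne
        have hlt' : p i₀ < p b :=
          lt_of_le_of_ne (hminle b hb) (fun e => hbne ((hinj e).symm))
        simp [hlt b (p i₀) hlt']
      · intro habs; exact absurd hi₀s habs
    by_cases hii : i = i₀
    · rw [hii]; exact hg0
    · have hsum' : ∑ i' ∈ s.erase i₀, g i' • v i' = 0 := by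
        rw [Finset.sum_erase_eq_sub hi₀s, hsum, hg0]
        simp
      exact ih (s.erase i₀) (Finset.erase_ssubset hi₀s) g hsum' i
        (Finset.mem_erase.mpr ⟨hii, hi⟩)

lemma msum_apply13 (l : Multiset (Fin n → ℤ)) (i : Fin n) :
    l.sum i = (l.map (fun θ => θ i)).sum := by
  induction l using Multiset.induction with
  | empty => simp
  | cons a s ih => simp [ih]

lemma msum_nonpos13 (l : Multiset ℤ) (h : ∀ x ∈ l, x ≤ 0) : l.sum ≤ 0 := by
  induction l using Multiset.induction with
  | empty => simp
  | cons a s ih =>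
    rw [Multiset.sum_cons]
    have h1 := h a (Multiset.mem_cons_self a s)
    have h2 := ih (fun x hx => h x (Multiset.mem_cons_of_mem hx))
    omega

end Aux13

theorem stmt13 (n : ℕ) (hn : 0 < n) {V : Type*} [AddCommGroup V] [Module ℂ V]
    (B : V →ₗ[ℂ] V →ₗ[ℂ] ℂ) (hBsymm : ∀ x y, B x y = B y x)
    (β : Fin n → V) (hβ : ∀ j, B (β j) (β j) ≠ 0) :
    (∀ θ ∈ Sset (lam B β) β, NegBordered θ) ∧
    LinearIndependent ℂ (fun θ : Sset (lam B β) β => cvec (θ : Fin n → ℤ)) ∧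
    (∀ w ∈ SumGE (Sset (lam B β) β) 2,
      ¬((∀ j, -1 ≤ w j) ∧ (Jset w).card ≤ 1)) := by
  have hne : ∀ θ : Fin n → ℤ, θ ∈ Sset (lam B β) β → (Jset θ).Nonempty := by
    intro θ hθ
    exact Finset.card_pos.mp (by rw [hθ.2]; norm_num)
  have part1 : ∀ θ ∈ Sset (lam B β) β, NegBordered θ := by
    intro θ hθ
    have h := hne θ hθ
    obtain ⟨hjk, hJeq, hj1, hk1, hbef, haft, hpos, hPk⟩ := struct13 B β hβ hθ h
    refine ⟨_, _, hjk, hj1, hk1, hbef, haft, fun i h1 h2 => hpos i ?_ ?_⟩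
    · intro e; rw [e] at h1; exact lt_irrefl _ h1
    · intro e; rw [e] at h2; exact lt_irrefl _ h2
  refine ⟨part1, ?_, ?_⟩
  · apply echelon13 _ (fun θ : Sset (lam B β) β => (Jset (θ : Fin n → ℤ)).min' (hne _ θ.2))
    · intro θ θ' hpp
      exact Subtype.ext (inj13 B β hβ θ.2 θ'.2 _ _ hpp)
    · intro θ
      have hm := Finset.min'_mem (Jset (θ : Fin n → ℤ)) (hne _ θ.2)
      rw [mem_Jset13] at hm
      simp [cvec, hm]
    · intro θ i hilt
      obtain ⟨_, _, _, _, hbef, _, _, _⟩ := struct13 B β hβ θ.2 (hne _ θ.2)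
      simp [cvec, hbef i hilt]
  · rintro w ⟨m', hm', l, hl, hcard, hsum⟩ ⟨hge, hcard1⟩
    have hlne : l ≠ 0 := by
      intro e; rw [e] at hcard; simp at hcard; omega
    obtain ⟨θ₀, hθ₀⟩ := Multiset.exists_mem_of_ne_zero hlne
    have hNB : ∀ θ ∈ l, NegBordered θ := fun θ hθ => part1 θ (hl θ hθ)
    have hw : ∀ i : Fin n, w i = (l.map (fun θ => θ i)).sum := by
      intro i; rw [← hsum]; exact msum_apply13 l i
    classical
    set F : Finset (Fin n) := Finset.univ.filter (fun i => ∃ θ ∈ l, θ i = -1) with hF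
    have hmemF : ∀ i : Fin n, i ∈ F ↔ ∃ θ ∈ l, θ i = -1 := by
      intro i; simp [hF]
    have hFne : F.Nonempty := by
      obtain ⟨j, k, _, hj1, _, _, _, _⟩ := hNB θ₀ hθ₀
      exact ⟨j, (hmemF j).mpr ⟨θ₀, hθ₀, hj1⟩⟩
    set a := F.min' hFne with ha
    set b := F.max' hFne with hb
    have hab : a < b := by
      obtain ⟨j, k, hjk, hj1, hk1, _, _, _⟩ := hNB θ₀ hθ₀
      have hjF : j ∈ F := (hmemF j).mpr ⟨θ₀, hθ₀, hj1⟩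
      have hkF : k ∈ F := (hmemF k).mpr ⟨θ₀, hθ₀, hk1⟩
      exact lt_of_le_of_lt (Finset.min'_le F j hjF)
        (lt_of_lt_of_le hjk (Finset.le_max' F k hkF))
    have hma : ∀ θ ∈ l, θ a ≤ 0 := by
      intro θ hθ
      obtain ⟨j, k, hjk, hj1, hk1, hbef, haft, hmid⟩ := hNB θ hθ
      have hjF : j ∈ F := (hmemF j).mpr ⟨θ, hθ, hj1⟩
      rcases lt_or_eq_of_le (Finset.min'_le F j hjF) with hcase | hcase
      · rw [hbef a hcase]
      · rw [← hcase] at hj1; rw [hj1]; omega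
    have hmb : ∀ θ ∈ l, θ b ≤ 0 := by
      intro θ hθ
      obtain ⟨j, k, hjk, hj1, hk1, hbef, haft, hmid⟩ := hNB θ hθ
      have hkF : k ∈ F := (hmemF k).mpr ⟨θ, hθ, hk1⟩
      rcases lt_or_eq_of_le (Finset.le_max' F k hkF) with hcase | hcase
      · rw [haft b hcase]
      · rw [hcase] at hk1; rw [hk1]; omega
    have hwval : ∀ c : Fin n, c ∈ F → (∀ θ ∈ l, θ c ≤ 0) → w c = -1 := by
      intro c hcF hc0
      obtain ⟨θc, hθc, hθc1⟩ := (hmemF c).mp hcF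
      have h1 : w c ≤ -1 := by
        obtain ⟨l', hll⟩ := Multiset.exists_cons_of_mem hθc
        have hwc : w c = θc c + (l'.map (fun θ => θ c)).sum := by
          rw [hw c, hll, Multiset.map_cons, Multiset.sum_cons]
        rw [hwc, hθc1]
        have hle : ((l'.map (fun θ => θ c)).sum : ℤ) ≤ 0 := by
          refine msum_nonpos13 _ ?_
          intro x hx
          obtain ⟨θ, hθ, rfl⟩ := Multiset.mem_map.mp hx
          exact hc0 θ (by rw [hll]; exact Multiset.mem_cons_of_mem hθ)
        linarith
      have h2 := hge c
      linarith
    have hwa : w a = -1 := hwval a (F.min'_mem hFne) hma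
    have hwb : w b = -1 := hwval b (F.max'_mem hFne) hmb
    have hsub : ({a, b} : Finset (Fin n)) ⊆ Jset w := by
      intro x hx
      rcases Finset.mem_insert.mp hx with rfl | hx
      · exact mem_Jset13.mpr hwa
      · rw [Finset.mem_singleton.mp hx]; exact mem_Jset13.mpr hwb
    have h2 : 2 ≤ (Jset w).card := by
      have hcc : ({a, b} : Finset (Fin n)).card = 2 := by
        rw [Finset.card_insert_of_notMem (by simp [hab.ne]), Finset.card_singleton]
      rw [← hcc]
      exact Finset.card_le_card hsub
    omega
end
end

section
/- Let β_1,…,β_n be a distinguished T-action datum in V. Then the family {θ^{(j)} : j ∈ J} is a basis of the ℂ-vector space ker β = {w ∈ ℂ^n : Σ_{j=1}^n w_j β_j = 0}. -/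
open Finset Matrix

noncomputable section

section PartA

variable {V : Type*} [AddCommGroup V] [Module ℂ V]
  (B : V →ₗ[ℂ] V →ₗ[ℂ] ℂ)

lemma sRefl_B (hBsymm : ∀ x y, B x y = B y x) {b : V} (hb : B b b ≠ 0) (x y : V) :
    B (sRefl B b x) (sRefl B b y) = B x y := by
  simp only [sRefl, cartan, map_sub, LinearMap.sub_apply, _root_.map_smul,
    LinearMap.smul_apply, smul_eq_mul]
  field_simp
  rw [hBsymm x b]
  ring

lemma cartan_sRefl (hBsymm : ∀ x y, B x y = B y x) {b : V} (hb : B b b ≠ 0) (x y : V) :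
    cartan B (sRefl B b x) (sRefl B b y) = cartan B x y := by
  unfold cartan
  rw [sRefl_B B hBsymm hb, sRefl_B B hBsymm hb]

lemma cartan_self_sRefl {b : V} (hb : B b b ≠ 0) (ξ : V) :
    cartan B b (sRefl B b ξ) = - cartan B b ξ := by
  simp only [sRefl, cartan, map_sub, _root_.map_smul, smul_eq_mul]
  field_simp
  ring

variable {n : ℕ} (β : Fin n → V) (hBsymm : ∀ x y, B x y = B y x)
  (hβ : ∀ j, B (β j) (β j) ≠ 0)

include hBsymm hβ in
lemma reflL_B : ∀ m, m ≤ n → ∀ x y, B (reflL B (gext β) m x) (reflL B (gext β) m y) = B x y := by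
  intro m
  induction m with
  | zero => intro _ x y; rfl
  | succ m ih =>
    intro hm x y
    have hmn : m < n := hm
    have hg : gext β m = β ⟨m, hmn⟩ := by simp [gext, hmn]
    show B (reflL B (gext β) m _) (reflL B (gext β) m _) = _
    rw [ih (le_of_lt hmn), hg, sRefl_B B hBsymm (hβ _)]

include hBsymm hβ in
lemma cartan_reflL {m : ℕ} (hm : m ≤ n) (x y : V) :
    cartan B (reflL B (gext β) m x) (reflL B (gext β) m y) = cartan B x y := by
  unfold cartan
  rw [reflL_B B β hBsymm hβ m hm, reflL_B B β hBsymm hβ m hm]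

include hBsymm hβ in
lemma reflL_expand : ∀ m, m ≤ n → ∀ ξ : V,
    reflL B (gext β) m ξ = ξ + ∑ j ∈ Finset.univ.filter (fun j : Fin n => j.val < m),
      cartan B (gam B β j) (reflL B (gext β) m ξ) • β j := by
  intro m
  induction m with
  | zero => intro _ ξ; simp [reflL]
  | succ m ih =>
    intro hm ξ
    have hmn : m < n := hm
    set jm : Fin n := ⟨m, hmn⟩ with hjm
    have hg : gext β m = β jm := by simp [gext, hmn]; rfl
    have hfil : Finset.univ.filter (fun j : Fin n => j.val < m + 1)
        = insert jm (Finset.univ.filter (fun j : Fin n => j.val < m)) := by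
      ext k
      simp only [Finset.mem_filter, Finset.mem_univ, true_and, Finset.mem_insert]
      constructor
      · intro hk
        rcases Nat.lt_succ_iff_lt_or_eq.mp hk with h | h
        · exact Or.inr h
        · exact Or.inl (Fin.ext h)
      · rintro (rfl | h)
        · exact Nat.lt_succ_self m
        · exact Nat.lt_succ_of_lt h
    set L := reflL B (gext β) (m + 1) ξ with hL
    have hfold : reflL B (gext β) m (sRefl B (β jm) ξ) = L := by
      rw [hL]; show _ = reflL B (gext β) m (sRefl B (gext β m) ξ); rw [hg]
    have hcart : cartan B (gam B β jm) L = - cartan B (β jm) ξ := by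
      rw [← hfold]
      have hgam : gam B β jm = reflL B (gext β) m (β jm) := rfl
      rw [hgam, cartan_reflL B β hBsymm hβ (le_of_lt hmn),
        cartan_self_sRefl B (hβ jm)]
    have h1 : L = sRefl B (β jm) ξ
        + ∑ j ∈ Finset.univ.filter (fun j : Fin n => j.val < m),
            cartan B (gam B β j) L • β j := by
      conv_lhs => rw [← hfold, ih (le_of_lt hmn)]
      rw [hfold]
    rw [hfil, Finset.sum_insert (by simp [hjm]), hcart]
    conv_lhs => rw [h1]
    rw [sRefl, neg_smul]
    try abel

include hBsymm hβ in
lemma gam_expand (k : Fin n) :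
    gam B β k = β k + ∑ j ∈ Finset.univ.filter (fun j : Fin n => j < k),
      cartan B (gam B β j) (gam B β k) • β j := by
  have h := reflL_expand B β hBsymm hβ k.val (le_of_lt k.isLt) (β k)
  have hg : gam B β k = reflL B (gext β) k.val (β k) := rfl
  rw [hg]
  convert h using 4
  exact Fin.lt_def

include hBsymm hβ in
lemma betaLin_Q_mulVec (v : Fin n → ℂ) :
    betaLin β ((Qmat B (gam B β)).mulVec v) = betaLin (gam B β) v := by
  set γ := gam B β with hγ
  have hQ : ∀ j k : Fin n, Qmat B γ j k
      = (if j = k then (1:ℂ) else 0) + (if j < k then cartan B (γ j) (γ k) else 0) := by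
    intro j k
    unfold Qmat
    rcases lt_trichotomy j k with h | h | h
    · simp [h, ne_of_lt h]
    · simp [h, lt_irrefl]
    · simp [h.ne', not_lt_of_gt h, lt_asymm h]
  show ∑ j, ((Qmat B γ).mulVec v) j • β j = ∑ k, v k • γ k
  simp only [Matrix.mulVec, dotProduct]
  have hsm : ∀ j, (∑ k, Qmat B γ j k * v k) • β j = ∑ k, (Qmat B γ j k * v k) • β j := by
    intro j; rw [Finset.sum_smul]
  simp only [hsm]
  rw [Finset.sum_comm]
  refine Finset.sum_congr rfl fun k _ => ?_
  simp only [hQ, add_mul, add_smul, Finset.sum_add_distrib]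
  have h1 : ∑ j, ((if j = k then (1:ℂ) else 0) * v k) • β j = v k • β k := by
    rw [Finset.sum_eq_single k]
    · simp
    · intro j _ hj; simp [hj]
    · simp
  have hterm : ∀ j : Fin n, ((if j < k then cartan B (γ j) (γ k) else 0) * v k) • β j
      = if j < k then v k • (cartan B (γ j) (γ k) • β j) else 0 := by
    intro j; split_ifs with h
    · rw [mul_comm, mul_smul]
    · simp
  have h2 : ∑ j, ((if j < k then cartan B (γ j) (γ k) else 0) * v k) • β j
      = v k • ∑ j ∈ Finset.univ.filter (fun j : Fin n => j < k),
          cartan B (γ j) (γ k) • β j := by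
    simp only [hterm]
    rw [Finset.smul_sum, Finset.sum_filter]
  rw [h1, h2, ← smul_add, ← gam_expand B β hBsymm hβ k]

end PartA
section PartD

open scoped Classical

variable {n : ℕ} {V : Type*} (γ : Fin n → V)

lemma plus_mem {j : Fin n} (h : (plusSet γ j).Nonempty) :
    j < (plusSet γ j).min' h ∧ γ ((plusSet γ j).min' h) = γ j := by
  have := (plusSet γ j).min'_mem h
  simp only [plusSet, Finset.mem_filter] at this
  exact this.2

lemma plus_min {j k : Fin n} (h : (plusSet γ j).Nonempty) (hk : j < k) (hγ : γ k = γ j) :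
    (plusSet γ j).min' h ≤ k := by
  apply Finset.min'_le
  simp only [plusSet, Finset.mem_filter]
  exact ⟨Finset.mem_univ k, hk, hγ⟩

lemma eplus_of_nonempty {j : Fin n} (h : (plusSet γ j).Nonempty) :
    eplus γ j = Pi.single ((plusSet γ j).min' h) 1 := by
  simp [eplus, h]

lemma eplus_of_empty {j : Fin n} (h : ¬ (plusSet γ j).Nonempty) :
    eplus γ j = 0 := by
  simp [eplus, h]

/-- The candidate basis vectors of `ker (betaLin γ)`. -/
def dvec (j : Fin n) : Fin n → ℂ := (Pi.single j 1 : Fin n → ℂ) - eplus γ j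

variable [AddCommGroup V] [Module ℂ V]

lemma betaLin_apply (β : Fin n → V) (w : Fin n → ℂ) : betaLin β w = ∑ j, w j • β j := rfl

lemma betaLin_single (β : Fin n → V) (j : Fin n) :
    betaLin β (Pi.single j 1) = β j := by
  rw [betaLin_apply, Finset.sum_eq_single j]
  · simp
  · intro k _ hk; simp [Pi.single_apply, hk]
  · simp

lemma dvec_mem_ker {j : Fin n} (h : (plusSet γ j).Nonempty) :
    betaLin γ (dvec γ j) = 0 := by
  rw [dvec, map_sub, eplus_of_nonempty γ h, betaLin_single, betaLin_single,
    (plus_mem γ h).2, sub_self]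

/-- Kernel membership is equivalent to all fiber sums vanishing. -/
lemma ker_iff (hdist : LinearIndependent ℂ (fun v : Set.range γ => (v : V)))
    (w : Fin n → ℂ) :
    betaLin γ w = 0 ↔
      ∀ i : Fin n, ∑ k ∈ Finset.univ.filter (fun k => γ k = γ i), w k = 0 := by
  set g : Fin n → Set.range γ := fun k => ⟨γ k, ⟨k, rfl⟩⟩ with hg
  have key : betaLin γ w
      = ∑ v : Set.range γ, (∑ k ∈ Finset.univ.filter (fun k => g k = v), w k) • (v : V) := by
    rw [betaLin_apply]
    rw [← Finset.sum_fiberwise Finset.univ g (fun k => w k • γ k)]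
    refine Finset.sum_congr rfl fun v _ => ?_
    rw [Finset.sum_smul]
    refine Finset.sum_congr rfl fun k hk => ?_
    have : g k = v := (Finset.mem_filter.mp hk).2
    have : γ k = (v : V) := by rw [← this]
    rw [this]
  constructor
  · intro h i
    have hz : ∀ v ∈ (Finset.univ : Finset (Set.range γ)),
        (∑ k ∈ Finset.univ.filter (fun k => g k = v), w k) = 0 := by
      apply linearIndependent_iff'.mp hdist
      rw [← key, h]
    have := hz (g i) (Finset.mem_univ _)
    rw [← this]
    apply Finset.sum_congr _ (fun _ _ => rfl)
    ext k
    simp only [Finset.mem_filter, Finset.mem_univ, true_and]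
    constructor
    · intro hk; rw [hg]; exact Subtype.ext hk
    · intro hk; exact congrArg Subtype.val hk
  · intro h
    rw [key]
    apply Finset.sum_eq_zero
    intro v _
    obtain ⟨i, hi⟩ := v.2
    have : Finset.univ.filter (fun k => g k = v) = Finset.univ.filter (fun k => γ k = γ i) := by
      ext k
      simp only [Finset.mem_filter, Finset.mem_univ, true_and]
      constructor
      · intro hk
        have := congrArg Subtype.val hk
        simp only [hg] at this
        rw [this, hi]
      · intro hk
        apply Subtype.ext
        show γ k = (v : V)
        rw [hk, hi]
    rw [this, h i, zero_smul]

lemma dvec_indep :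
    LinearIndependent ℂ
      (fun j : {j : Fin n // (plusSet γ j).Nonempty} => dvec γ j.val) := by
  rw [linearIndependent_iff']
  intro s c hsum
  suffices main : ∀ m : ℕ, ∀ j ∈ s, (j : {j : Fin n // (plusSet γ j).Nonempty}).val.val = m
      → c j = 0 by
    intro i hi
    exact main i.val.val i hi rfl
  intro m
  induction m using Nat.strong_induction_on with
  | _ m ih =>
    intro j hj hjm
    have heval := congrFun hsum j.val
    rw [Finset.sum_apply] at heval
    simp only [Pi.smul_apply, dvec, Pi.sub_apply, smul_eq_mul] at heval
    have hexp : ∀ k ∈ s, c k * ((Pi.single k.val 1 : Fin n → ℂ) j.val - eplus γ k.val j.val)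
        = c k * (if j.val = k.val then 1 else 0)
          - c k * (if j.val = (plusSet γ k.val).min' k.2 then 1 else 0) := by
      intro k _
      rw [eplus_of_nonempty γ k.2, Pi.single_apply, Pi.single_apply, mul_sub]
    rw [Finset.sum_congr rfl hexp, Finset.sum_sub_distrib] at heval
    have h1 : ∑ k ∈ s, c k * (if j.val = k.val then 1 else 0) = c j := by
      rw [Finset.sum_eq_single_of_mem j hj]
      · simp
      · intro k _ hk
        have : ¬ (j.val = k.val) := fun h => hk (Subtype.ext h).symm
        simp [this]
    have h2 : ∑ k ∈ s, c k * (if j.val = (plusSet γ k.val).min' k.2 then 1 else 0) = 0 := by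
      apply Finset.sum_eq_zero
      intro k hk
      by_cases hcase : j.val = (plusSet γ k.val).min' k.2
      · have hlt : k.val < j.val := by
          rw [hcase]; exact (plus_mem γ k.2).1
        have : c k = 0 := ih k.val.val (by omega) k hk rfl
        simp [this]
      · simp [hcase]
    rw [h1, h2, sub_zero] at heval
    exact heval

end PartD
section PartE

open scoped Classical

variable {n : ℕ} {V : Type*} [AddCommGroup V] [Module ℂ V] (γ : Fin n → V)

lemma mem_plusSet_iff {j k : Fin n} : k ∈ plusSet γ j ↔ j < k ∧ γ k = γ j := by
  simp [plusSet]

lemma dvec_span (hdist : LinearIndependent ℂ (fun v : Set.range γ => (v : V)))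
    (w : Fin n → ℂ) (hw : betaLin γ w = 0) :
    w ∈ Submodule.span ℂ
      (Set.range (fun j : {j : Fin n // (plusSet γ j).Nonempty} => dvec γ j.val)) := by
  have hker := (ker_iff γ hdist w).mp hw
  set c : {j : Fin n // (plusSet γ j).Nonempty} → ℂ :=
    fun j => ∑ k ∈ Finset.univ.filter (fun k => γ k = γ j.val ∧ k ≤ j.val), w k with hc
  suffices hrep : w = ∑ j : {j : Fin n // (plusSet γ j).Nonempty}, c j • dvec γ j.val by
    rw [hrep]
    exact Submodule.sum_mem _ fun j _ =>
      Submodule.smul_mem _ _ (Submodule.subset_span ⟨j, rfl⟩)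
  funext i
  rw [Finset.sum_apply]
  simp only [Pi.smul_apply, dvec, Pi.sub_apply, smul_eq_mul]
  have hexp : ∀ j : {j : Fin n // (plusSet γ j).Nonempty},
      c j * ((Pi.single j.val 1 : Fin n → ℂ) i - eplus γ j.val i)
      = c j * (if i = j.val then 1 else 0)
        - c j * (if i = (plusSet γ j.val).min' j.2 then 1 else 0) := by
    intro j
    rw [eplus_of_nonempty γ j.2, Pi.single_apply, Pi.single_apply, mul_sub]
  rw [Finset.sum_congr rfl (fun j _ => hexp j), Finset.sum_sub_distrib]
  set S : ℂ := ∑ k ∈ Finset.univ.filter (fun k => γ k = γ i ∧ k < i), w k with hS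
  have hT2 : ∑ j : {j : Fin n // (plusSet γ j).Nonempty},
      c j * (if i = (plusSet γ j.val).min' j.2 then 1 else 0) = S := by
    by_cases hp : (Finset.univ.filter (fun k => γ k = γ i ∧ k < i)).Nonempty
    · set q := (Finset.univ.filter (fun k => γ k = γ i ∧ k < i)).max' hp with hqdef
      have hqmem := (Finset.univ.filter (fun k => γ k = γ i ∧ k < i)).max'_mem hp
      rw [Finset.mem_filter] at hqmem
      obtain ⟨-, hqγ, hqlt⟩ := hqmem
      have hq2 : ∀ k, γ k = γ i → k < i → k ≤ q := fun k h1 h2 =>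
        Finset.le_max' _ k (Finset.mem_filter.mpr ⟨Finset.mem_univ _, h1, h2⟩)
      have hne : (plusSet γ q).Nonempty :=
        ⟨i, (mem_plusSet_iff γ).mpr ⟨hqlt, hqγ.symm⟩⟩
      have hmin : (plusSet γ q).min' hne = i := by
        have h1 : (plusSet γ q).min' hne ≤ i := plus_min γ hne hqlt hqγ.symm
        rcases lt_or_eq_of_le h1 with h2 | h2
        · exfalso
          obtain ⟨hm1, hm2⟩ := plus_mem γ hne
          have : (plusSet γ q).min' hne ≤ q := hq2 _ (by rw [hm2, hqγ]) h2
          exact absurd hm1 (not_lt.mpr this)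
        · exact h2
      rw [Finset.sum_eq_single_of_mem ⟨q, hne⟩ (Finset.mem_univ _)]
      · rw [if_pos hmin.symm, mul_one, hc, hS]
        apply Finset.sum_congr _ (fun _ _ => rfl)
        ext k
        simp only [Finset.mem_filter, Finset.mem_univ, true_and]
        constructor
        · rintro ⟨h1, h2⟩
          exact ⟨h1.trans hqγ, lt_of_le_of_lt h2 hqlt⟩
        · rintro ⟨h1, h2⟩
          exact ⟨h1.trans hqγ.symm, hq2 k h1 h2⟩
      · intro j _ hj
        by_cases hcase : i = (plusSet γ j.val).min' j.2
        · exfalso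
          obtain ⟨hj1, hj2⟩ := plus_mem γ j.2
          rw [← hcase] at hj1 hj2
          -- hj1 : j.val < i, hj2 : γ i = γ j.val
          have hjq : j.val ≤ q := hq2 j.val hj2.symm hj1
          rcases lt_or_eq_of_le hjq with h3 | h3
          · have hqin : q ∈ plusSet γ j.val :=
              (mem_plusSet_iff γ).mpr ⟨h3, by rw [hqγ, hj2]⟩
            have := Finset.min'_le _ q hqin
            rw [← hcase] at this
            exact absurd hqlt (not_lt.mpr this)
          · exact hj (Subtype.ext h3)
        · simp [hcase]
    · have hS0 : S = 0 := by
        rw [hS]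
        apply Finset.sum_eq_zero
        intro k hk
        exact absurd ⟨k, hk⟩ hp
      rw [hS0]
      apply Finset.sum_eq_zero
      intro j _
      by_cases hcase : i = (plusSet γ j.val).min' j.2
      · exfalso
        obtain ⟨hj1, hj2⟩ := plus_mem γ j.2
        rw [← hcase] at hj1 hj2
        exact hp ⟨j.val, Finset.mem_filter.mpr ⟨Finset.mem_univ _, hj2.symm, hj1⟩⟩
      · simp [hcase]
  rw [hT2]
  by_cases hi : (plusSet γ i).Nonempty
  · have hT1 : ∑ j : {j : Fin n // (plusSet γ j).Nonempty},
        c j * (if i = j.val then 1 else 0) = c ⟨i, hi⟩ := by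
      rw [Finset.sum_eq_single_of_mem ⟨i, hi⟩ (Finset.mem_univ _)]
      · simp
      · intro j _ hj
        have : ¬ (i = j.val) := fun h => hj (Subtype.ext h.symm)
        simp [this]
    have hsplit : Finset.univ.filter (fun k => γ k = γ i ∧ k ≤ i)
        = insert i (Finset.univ.filter (fun k => γ k = γ i ∧ k < i)) := by
      ext k
      simp only [Finset.mem_filter, Finset.mem_univ, true_and, Finset.mem_insert]
      constructor
      · rintro ⟨h1, h2⟩
        rcases lt_or_eq_of_le h2 with h3 | h3
        · exact Or.inr ⟨h1, h3⟩
        · exact Or.inl h3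
      · rintro (rfl | ⟨h1, h2⟩)
        · exact ⟨rfl, le_refl _⟩
        · exact ⟨h1, le_of_lt h2⟩
    have hci : c ⟨i, hi⟩ = w i + S := by
      rw [hc, hS]
      simp only
      rw [hsplit, Finset.sum_insert (by simp)]
    rw [hT1, hci]
    ring
  · have hT1 : ∑ j : {j : Fin n // (plusSet γ j).Nonempty},
        c j * (if i = j.val then 1 else 0) = 0 := by
      apply Finset.sum_eq_zero
      intro j _
      have : ¬ (i = j.val) := by
        intro h
        exact hi (h ▸ j.2)
      simp [this]
    have hsplit : Finset.univ.filter (fun k => γ k = γ i)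
        = insert i (Finset.univ.filter (fun k => γ k = γ i ∧ k < i)) := by
      ext k
      simp only [Finset.mem_filter, Finset.mem_univ, true_and, Finset.mem_insert]
      constructor
      · intro h1
        rcases lt_trichotomy k i with h2 | h2 | h2
        · exact Or.inr ⟨h1, h2⟩
        · exact Or.inl h2
        · exact absurd ⟨k, (mem_plusSet_iff γ).mpr ⟨h2, h1⟩⟩ hi
      · rintro (rfl | ⟨h1, _⟩)
        · rfl
        · exact h1
    have h0 := hker i
    rw [hsplit, Finset.sum_insert (by simp), ← hS] at h0
    rw [hT1]
    linear_combination h0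


end PartE
theorem stmt14 (n : ℕ) (hn : 0 < n) {V : Type*} [AddCommGroup V] [Module ℂ V]
    (B : V →ₗ[ℂ] V →ₗ[ℂ] ℂ) (hBsymm : ∀ x y, B x y = B y x)
    (β : Fin n → V) (hβ : ∀ j, B (β j) (β j) ≠ 0)
    (hdist : LinearIndependent ℂ (fun v : Set.range (gam B β) => (v : V))) :
    LinearIndependent ℂ
      (fun j : {j : Fin n // (plusSet (gam B β) j).Nonempty} => thetaC B β j.val) ∧
    Submodule.span ℂ
        (Set.range (fun j : {j : Fin n // (plusSet (gam B β) j).Nonempty} =>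
          thetaC B β j.val)) =
      LinearMap.ker (betaLin β) := by
  classical
  set γ := gam B β with hγ
  set Q := Qmat B γ with hQdef
  have hQup : Q.BlockTriangular id := by
    intro i j hij
    have h1 : ¬ (i = j) := by
      intro h; rw [h] at hij; exact lt_irrefl _ hij
    have h2 : ¬ (i < j) := not_lt_of_gt hij
    simp [hQdef, Qmat, h1, h2]
  have hdet : Q.det = 1 := by
    rw [Matrix.det_of_upperTriangular hQup]
    apply Finset.prod_eq_one
    intro i _
    simp [hQdef, Qmat]
  have hinv : Invertible Q := Q.invertibleOfIsUnitDet (by rw [hdet]; exact isUnit_one)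
  set e : (Fin n → ℂ) ≃ₗ[ℂ] (Fin n → ℂ) := Q.toLinearEquiv' hinv with hedef
  have he : ∀ v, e v = Q.mulVec v := by
    intro v
    have := congrFun (congrArg DFunLike.coe (Q.toLinearEquiv'_apply hinv)) v
    rw [hedef]
    rw [show ((Q.toLinearEquiv' hinv : (Fin n → ℂ) ≃ₗ[ℂ] (Fin n → ℂ)) v
        = (↑(Q.toLinearEquiv' hinv) : (Fin n → ℂ) →ₗ[ℂ] (Fin n → ℂ)) v) from rfl]
    rw [this, Matrix.toLin'_apply]
  have hcomp : betaLin γ = (betaLin β).comp e.toLinearMap := by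
    apply LinearMap.ext
    intro v
    rw [LinearMap.comp_apply]
    show betaLin γ v = betaLin β (e v)
    rw [he v, hγ, hQdef, hγ, betaLin_Q_mulVec B β hBsymm hβ v]
  have hker_eq : LinearMap.ker (betaLin β)
      = Submodule.map e.toLinearMap (LinearMap.ker (betaLin γ)) := by
    have h1 : LinearMap.ker (betaLin γ)
        = Submodule.comap e.toLinearMap (LinearMap.ker (betaLin β)) := by
      rw [hcomp, LinearMap.ker_comp]
    rw [h1]
    exact (Submodule.map_comap_eq_of_surjective
      (show Function.Surjective ⇑(e.toLinearMap) from e.surjective) _).symm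
  have htheta : ∀ j : {j : Fin n // (plusSet γ j).Nonempty},
      thetaC B β j.val = e.toLinearMap (dvec γ j.val) := by
    intro j
    show thetaC B β j.val = e (dvec γ j.val)
    rw [he, thetaC, dvec]
  have hfun : (fun j : {j : Fin n // (plusSet γ j).Nonempty} => thetaC B β j.val)
      = (⇑e.toLinearMap ∘ fun j : {j : Fin n // (plusSet γ j).Nonempty} => dvec γ j.val) :=
    funext htheta
  have hspan_d : Submodule.span ℂ
      (Set.range (fun j : {j : Fin n // (plusSet γ j).Nonempty} => dvec γ j.val))
      = LinearMap.ker (betaLin γ) := by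
    apply le_antisymm
    · rw [Submodule.span_le]
      rintro x ⟨j, rfl⟩
      exact LinearMap.mem_ker.mpr (dvec_mem_ker γ j.2)
    · intro w hw
      exact dvec_span γ hdist w (LinearMap.mem_ker.mp hw)
  constructor
  · rw [hfun]
    exact (dvec_indep γ).map' e.toLinearMap e.ker
  · rw [hfun, Set.range_comp, ← Submodule.map_span, hspan_d, hker_eq]
end
end

section
/- Let β_1,…,β_n be a distinguished T-action datum in V, let 1 ≤ j < k ≤ n and let f_{j+1},…,f_{k−1} ∈ ℂ. Define η_j = γ_j and recursively η_l = s_{γ_l}(η_{l−1}) − f_l γ_l for l = j+1,…,k−1. Then −β_j − β_k + Σ_{l=j+1}^{k−1} f_l β_l = 0 if and only if η_{k−1} = γ_k. -/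
open Finset Matrix

noncomputable section

namespace Stmt15Aux
variable {V : Type*} [AddCommGroup V] [Module ℂ V] (B : V →ₗ[ℂ] V →ₗ[ℂ] ℂ)

lemma cartan_sub (b x y : V) : cartan B b (x - y) = cartan B b x - cartan B b y := by
  simp [cartan, mul_sub, sub_div]

lemma cartan_add (b x y : V) : cartan B b (x + y) = cartan B b x + cartan B b y := by
  simp [cartan, mul_add, add_div]

lemma cartan_smul (b : V) (a : ℂ) (x : V) : cartan B b (a • x) = a * cartan B b x := by
  simp [cartan]; ring

lemma sRefl_sub (b x y : V) : sRefl B b (x - y) = sRefl B b x - sRefl B b y := by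
  simp only [sRefl, cartan_sub, sub_smul]; abel

lemma sRefl_add (b x y : V) : sRefl B b (x + y) = sRefl B b x + sRefl B b y := by
  simp only [sRefl, cartan_add, add_smul]; abel

lemma sRefl_smul (b : V) (a : ℂ) (x : V) : sRefl B b (a • x) = a • sRefl B b x := by
  simp only [sRefl, cartan_smul, smul_sub, mul_smul]

lemma sRefl_neg (b x : V) : sRefl B b (-x) = -sRefl B b x := by
  have := sRefl_sub B b 0 x
  simpa [sRefl, cartan] using this

lemma sRefl_self {b : V} (hb : B b b ≠ 0) : sRefl B b b = -b := by
  rw [sRefl, cartan, mul_div_assoc, div_self hb, mul_one, two_smul]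
  abel

lemma sRefl_sRefl {b : V} (hb : B b b ≠ 0) (x : V) : sRefl B b (sRefl B b x) = x := by
  conv_lhs => rw [show sRefl B b x = x - cartan B b x • b from rfl,
    sRefl_sub, sRefl_smul, sRefl_self B hb, smul_neg]
  rw [sRefl]
  abel

lemma refl_inv (hs : ∀ x y, B x y = B y x) {b : V} (hb : B b b ≠ 0) (x y : V) :
    B (sRefl B b x) (sRefl B b y) = B x y := by
  simp only [sRefl, cartan, map_sub, _root_.map_smul, LinearMap.sub_apply, LinearMap.smul_apply,
    smul_eq_mul]
  rw [hs x b]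
  field_simp
  ring

lemma sRefl_conj (hs : ∀ x y, B x y = B y x) {b : V} (hb : B b b ≠ 0) (c x : V) :
    sRefl B (sRefl B b c) (sRefl B b x) = sRefl B b (sRefl B c x) := by
  have h1 : cartan B (sRefl B b c) (sRefl B b x) = cartan B c x := by
    unfold cartan
    rw [refl_inv B hs hb, refl_inv B hs hb]
  rw [show sRefl B (sRefl B b c) (sRefl B b x)
      = sRefl B b x - cartan B (sRefl B b c) (sRefl B b x) • sRefl B b c from rfl,
    h1, ← sRefl_smul, ← sRefl_sub]
  rfl

lemma reflL_sub (g : ℕ → V) (m : ℕ) (x y : V) :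
    reflL B g m (x - y) = reflL B g m x - reflL B g m y := by
  induction m generalizing x y with
  | zero => rfl
  | succ m ih => simp only [reflL, sRefl_sub]; exact ih _ _

lemma reflL_smul (g : ℕ → V) (m : ℕ) (a : ℂ) (x : V) :
    reflL B g m (a • x) = a • reflL B g m x := by
  induction m generalizing x with
  | zero => rfl
  | succ m ih => simp only [reflL, sRefl_smul]; exact ih _

lemma reflL_conj (hs : ∀ x y, B x y = B y x) (g : ℕ → V) (m : ℕ) (c x : V)
    (hg : ∀ i, i < m → B (g i) (g i) ≠ 0) :
    sRefl B (reflL B g m c) (reflL B g m x) = reflL B g m (sRefl B c x) := by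
  induction m generalizing c x with
  | zero => rfl
  | succ m ih =>
    simp only [reflL]
    rw [ih _ _ (fun i hi => hg i (hi.trans m.lt_succ_self)),
      sRefl_conj B hs (hg m m.lt_succ_self)]

lemma reflL_inj (g : ℕ → V) : ∀ (m : ℕ), (∀ i, i < m → B (g i) (g i) ≠ 0) →
    ∀ x y : V, reflL B g m x = reflL B g m y → x = y
  | 0, _, x, y, h => h
  | m + 1, hg, x, y, h => by
    have h2 := reflL_inj g m (fun i hi => hg i (hi.trans m.lt_succ_self)) _ _ h
    have h3 := congrArg (sRefl B (g m)) h2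
    rwa [sRefl_sRefl B (hg m m.lt_succ_self), sRefl_sRefl B (hg m m.lt_succ_self)] at h3

end Stmt15Aux

theorem stmt15 (n : ℕ) (hn : 0 < n) {V : Type*} [AddCommGroup V] [Module ℂ V]
    (B : V →ₗ[ℂ] V →ₗ[ℂ] ℂ) (hBsymm : ∀ x y, B x y = B y x)
    (β : Fin n → V) (hβ : ∀ j, B (β j) (β j) ≠ 0)
    (hdist : LinearIndependent ℂ (fun v : Set.range (gam B β) => (v : V)))
    (j k : Fin n) (hjk : j < k) (f : Fin n → ℂ)
    (η : Fin n → V) (hη0 : η j = gam B β j)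
    (hrec : ∀ l m : Fin n, j < l → l < k → (m : ℕ) + 1 = (l : ℕ) →
      η l = sRefl B (gam B β l) (η m) - f l • gam B β l)
    (m : Fin n) (hm : (m : ℕ) + 1 = (k : ℕ)) :
    (-β j - β k + ∑ l ∈ Finset.univ.filter (fun l => j < l ∧ l < k), f l • β l = 0)
      ↔ η m = gam B β k := by
  
  classical
  have hjk' : (j : ℕ) < (k : ℕ) := hjk
  set g : ℕ → V := gext β with hgdef
  have hgβ : ∀ l : Fin n, g l.val = β l := fun l => dif_pos l.isLt
  have hgnz : ∀ i, i < n → B (g i) (g i) ≠ 0 := by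
    intro i hi
    have h : g i = β ⟨i, hi⟩ := dif_pos hi
    rw [h]; exact hβ _
  have hgam : ∀ l : Fin n, gam B β l = reflL B g l.val (β l) := fun l => rfl
  have base : ∀ l : Fin n, l = j → η l = reflL B g (l.val + 1)
      (-β j + ∑ i ∈ Finset.univ.filter (fun i => j < i ∧ i ≤ l), f i • β i) := by
    intro l hl
    subst hl
    have hemp : Finset.univ.filter (fun i : Fin n => l < i ∧ i ≤ l) = ∅ := by
      ext i
      simp only [Finset.mem_filter, Finset.mem_univ, true_and, Finset.notMem_empty, iff_false,
        not_and]
      intro h1 h2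
      exact absurd (lt_of_lt_of_le h1 h2) (lt_irrefl l)
    rw [hemp, Finset.sum_empty, add_zero, hη0, hgam]
    show reflL B g l.val (β l) = reflL B g l.val (sRefl B (g l.val) (-β l))
    rw [hgβ l, Stmt15Aux.sRefl_neg, Stmt15Aux.sRefl_self B (hβ l), neg_neg]
  have key : ∀ t : ℕ, ∀ l : Fin n, l.val = t → j ≤ l → l < k →
      η l = reflL B g (l.val + 1)
        (-β j + ∑ i ∈ Finset.univ.filter (fun i => j < i ∧ i ≤ l), f i • β i) := by
    intro t
    induction t with
    | zero =>
      intro l hl hjl hlk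
      have hjl' : (j : ℕ) ≤ (l : ℕ) := hjl
      exact base l (Fin.ext (by omega)).symm
    | succ t ih =>
      intro l hl hjl hlk
      by_cases hlj : l = j
      · exact base l hlj
      · have hjl2 : j < l := lt_of_le_of_ne hjl (Ne.symm hlj)
        have hjl3 : (j : ℕ) < (l : ℕ) := hjl2
        have hlk' : (l : ℕ) < (k : ℕ) := hlk
        have htn : t < n := lt_trans (hl ▸ t.lt_succ_self) l.isLt
        set m' : Fin n := ⟨t, htn⟩ with hm'def
        have hm'v : (m' : ℕ) = t := rfl
        have hm'1 : (m' : ℕ) + 1 = (l : ℕ) := by omega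
        have hjm : j ≤ m' := by rw [Fin.le_def]; omega
        have hm'k : m' < k := by rw [Fin.lt_def]; omega
        have hrecl := hrec l m' hjl2 hlk hm'1
        have ihm := ih m' rfl hjm hm'k
        set ζ := -β j + ∑ i ∈ Finset.univ.filter (fun i => j < i ∧ i ≤ m'), f i • β i with hζ
        rw [hrecl, ihm, hgam l]
        have hgt : g (t + 1) = β l := by rw [← hl]; exact hgβ l
        rw [show (l : ℕ) = t + 1 from hl, hm'v]
        rw [Stmt15Aux.reflL_conj B hBsymm g (t + 1) _ _
          (fun i hi => hgnz i (by omega)),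
          ← Stmt15Aux.reflL_smul, ← Stmt15Aux.reflL_sub]
        show reflL B g (t + 1) _ = reflL B g (t + 1) (sRefl B (g (t + 1)) _)
        rw [hgt]
        congr 1
        have hstep : sRefl B (β l) ζ - f l • β l = sRefl B (β l) (ζ + f l • β l) := by
          rw [Stmt15Aux.sRefl_add B (β l) ζ (f l • β l), Stmt15Aux.sRefl_smul,
            Stmt15Aux.sRefl_self B (hβ l), smul_neg]
          abel
        rw [hstep]
        congr 1
        have hsum : Finset.univ.filter (fun i : Fin n => j < i ∧ i ≤ l)
            = insert l (Finset.univ.filter (fun i : Fin n => j < i ∧ i ≤ m')) := by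
          ext i
          simp only [Finset.mem_filter, Finset.mem_univ, true_and, Finset.mem_insert,
            Fin.lt_def, Fin.le_def, Fin.ext_iff, hl, hm'v]
          omega
        rw [hsum, Finset.sum_insert (by
          simp only [Finset.mem_filter, Finset.mem_univ, true_and, Fin.le_def, hl, hm'v,
            not_and]
          intro _; omega)]
        rw [hζ]
        abel
  have hmk : m < k := by rw [Fin.lt_def]; omega
  have hjm : j ≤ m := by rw [Fin.le_def]; omega
  have hkey := key m.val m rfl hjm hmk
  rw [hm] at hkey
  have hsets : Finset.univ.filter (fun i : Fin n => j < i ∧ i ≤ m)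
      = Finset.univ.filter (fun i : Fin n => j < i ∧ i < k) := by
    ext i
    simp only [Finset.mem_filter, Finset.mem_univ, true_and, Fin.lt_def, Fin.le_def]
    omega
  rw [hsets] at hkey
  set S := ∑ i ∈ Finset.univ.filter (fun i : Fin n => j < i ∧ i < k), f i • β i with hS
  have hg' : ∀ i, i < (k : ℕ) → B (g i) (g i) ≠ 0 :=
    fun i hi => hgnz i (lt_of_lt_of_le hi k.isLt.le)
  rw [hkey, hgam k]
  constructor
  · intro h0
    have h1 : -β j + S = β k := by
      rw [← sub_eq_zero, show (-β j + S) - β k = -β j - β k + S from by abel]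
      exact h0
    rw [h1]
  · intro h0
    have h1 : -β j + S = β k := Stmt15Aux.reflL_inj B g (k : ℕ) hg' _ _ h0
    rw [show -β j - β k + S = (-β j + S) - β k from by abel, h1, sub_self]
end
end
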